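/- Let ℓ > 0, y > 1, x ∈ ℝ, and for n ∈ ℤ set ξ = nℓ − x. Define, for real Y and X = Y/(y·tanh ξ) + n (assuming sinh ξ ≠ 0), the quantities F(m) = 2Y·cosh(mℓ − x) + 2y(m − X)·sinh(mℓ − x) for m ∈ ℤ. Then the equation F(n+1)·F(n−1) = 4·sinh²(ℓ) is equivalent to Z = Y/y being a root of the quadratic Z²·sinh²(ℓ)/sinh²(ξ) − 2Z·sinh(ℓ)·cosh(ℓ) + (sinh²(ξ) − (1 − y⁻²)·sinh²(ℓ)) = 0. -/

import Mathlib

theorem quadratic_equivalence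
    (ℓ y x : ℝ) (hℓ : ℓ > 0) (hy : y > 1) (n : ℤ)
    (ξ : ℝ) (hξ : ξ = (n : ℝ) * ℓ - x) (hsξ : Real.sinh ξ ≠ 0)
    (Y X : ℝ) (hX : X = Y / (y * Real.tanh ξ) + (n : ℝ))
    (F : ℤ → ℝ)
    (hF : ∀ m : ℤ, F m = 2 * Y * Real.cosh ((m : ℝ) * ℓ - x)
        + 2 * y * ((m : ℝ) - X) * Real.sinh ((m : ℝ) * ℓ - x)) :
    F (n + 1) * F (n - 1) = 4 * (Real.sinh ℓ)^2 ↔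
      (Y / y)^2 * (Real.sinh ℓ)^2 / (Real.sinh ξ)^2
        - 2 * (Y / y) * Real.sinh ℓ * Real.cosh ℓ
        + ((Real.sinh ξ)^2 - (1 - (y⁻¹)^2) * (Real.sinh ℓ)^2) = 0 := by
  have hy0 : y ≠ 0 := by linarith
  have hcξ : Real.cosh ξ ≠ 0 := (Real.cosh_pos ξ).ne'
  have h1 : ((n : ℝ) + 1) * ℓ - x = ξ + ℓ := by rw [hξ]; ring
  have h2 : ((n : ℝ) - 1) * ℓ - x = ξ - ℓ := by rw [hξ]; ring
  have key : F (n + 1) * F (n - 1) - 4 * (Real.sinh ℓ)^2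
      = (-(4*y^2)) * ((Y / y)^2 * (Real.sinh ℓ)^2 / (Real.sinh ξ)^2
        - 2 * (Y / y) * Real.sinh ℓ * Real.cosh ℓ
        + ((Real.sinh ξ)^2 - (1 - (y⁻¹)^2) * (Real.sinh ℓ)^2)) := by
    rw [hF, hF, hX, Real.tanh_eq_sinh_div_cosh]
    push_cast
    rw [h1, h2, Real.sinh_add, Real.cosh_add, Real.sinh_sub, Real.cosh_sub]
    have hc1 := Real.cosh_sq ξ
    have hc2 := Real.cosh_sq ℓ
    field_simp
    linear_combination (-4*Y^2*(Real.cosh ξ)^2*(Real.sinh ℓ)^2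
        + 8*Y*y*(Real.sinh ξ)^2*(Real.sinh ℓ)*(Real.cosh ℓ)
        + 4*Y^2*(Real.sinh ξ)^2*(Real.sinh ℓ)^2
        + 4*y^2*(Real.sinh ξ)^2*(Real.sinh ℓ)^2
        - 4*Y^2*(Real.sinh ℓ)^2) * hc1
      + (-4*y^2*(Real.sinh ξ)^4) * hc2
  have h4 : (-(4*y^2)) ≠ 0 := neg_ne_zero.mpr (by positivity)
  constructor
  · intro h
    have h0 : (-(4*y^2)) * ((Y / y)^2 * (Real.sinh ℓ)^2 / (Real.sinh ξ)^2
        - 2 * (Y / y) * Real.sinh ℓ * Real.cosh ℓ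
        + ((Real.sinh ξ)^2 - (1 - (y⁻¹)^2) * (Real.sinh ℓ)^2)) = 0 := by
      rw [← key, h]; ring
    exact (mul_eq_zero.mp h0).resolve_left h4
  · intro h
    rw [h, mul_zero] at key
    linarith
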